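/- Let A* be a projective line arrangement in ℙ²(ℂ), let L ∈ A*, and let v and w be two distinct points of M₃(A*) lying on L. Suppose that for every graph of Fan type F ∈ 𝓕(A*) in which {v, w} is an edge, every simple circuit of F containing the edge {v, w} has at least two edges lying on the line L. Then A* has a decone with a general position partition. -/

import Mathlib

open scoped Classical

/-- The complex projective plane `ℙ²(ℂ)`, the projectivization of `ℂ³`. -/
abbrev P2 : Type := Projectivization ℂ (Fin 3 → ℂ)

/-- A projective line in `ℙ²(ℂ)`: the image of a 2-dimensional linear subspace of `ℂ³`. -/
def IsProjLine (L : Set P2) : Prop :=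
  ∃ W : Submodule ℂ (Fin 3 → ℂ), Module.finrank ℂ W = 2 ∧ L = {p : P2 | p.rep ∈ W}

/-- The multiplicity of a point in an arrangement: the number of lines passing through it. -/
noncomputable def mult (A : Finset (Set P2)) (p : P2) : ℕ :=
  (A.filter (fun L => p ∈ L)).card

/-- `M₃(A)`: the set of points lying on at least three lines of `A`. -/
def M3 (A : Finset (Set P2)) : Set P2 := {p | 3 ≤ mult A p}

/-- `A` has a decone with a general position partition. -/
def HasDeconeGPP (A : Finset (Set P2)) : Prop :=
  ∃ L ∈ A, ∃ C₁ C₂ : Finset (Set P2),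
    C₁.Nonempty ∧ C₂.Nonempty ∧ Disjoint C₁ C₂ ∧ C₁ ∪ C₂ = A.erase L ∧
    ∀ H₁ ∈ C₁, ∀ H₂ ∈ C₂, ∀ p ∈ H₁ ∩ H₂, ∀ K ∈ A, p ∈ K → K = H₁ ∨ K = H₂

/-- `F` is a graph of Fan type for the arrangement `A`: its vertices are the points of
`M₃(A)`, every edge joins two points on a common line of `A`, and for each line `L` the
edges joining points of `M₃(A) ∩ L` are exactly the consecutive pairs of some enumeration
of `M₃(A) ∩ L`. -/
def IsFanGraph (A : Finset (Set P2)) (F : SimpleGraph ↥(M3 A)) : Prop :=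
  (∀ v w : ↥(M3 A), F.Adj v w → ∃ L ∈ A, (v : P2) ∈ L ∧ (w : P2) ∈ L) ∧
  ∀ L ∈ A, (∃ v : ↥(M3 A), (v : P2) ∈ L) →
    ∃ (m : ℕ) (e : Fin m → ↥(M3 A)), Function.Injective e ∧
      (∀ v : ↥(M3 A), (v : P2) ∈ L ↔ ∃ i, e i = v) ∧
      (∀ v w : ↥(M3 A), (v : P2) ∈ L → (w : P2) ∈ L →
        (F.Adj v w ↔ ∃ i j : Fin m, (j : ℕ) = (i : ℕ) + 1 ∧
          ((e i = v ∧ e j = w) ∨ (e i = w ∧ e j = v))))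

lemma line_unique {H K : Set P2} (hH : IsProjLine H) (hK : IsProjLine K)
    {x y : P2} (hxy : x ≠ y) (hxH : x ∈ H) (hxK : x ∈ K) (hyH : y ∈ H) (hyK : y ∈ K) :
    H = K := by
  obtain ⟨W, hW2, rfl⟩ := hH
  obtain ⟨W', hW2', rfl⟩ := hK
  have hind : LinearIndependent ℂ ![x.rep, y.rep] := by
    have := (Projectivization.independent_pair_iff_ne x y).2 hxy
    rw [Projectivization.independent_iff] at this
    have heq : ![x.rep, y.rep] = Projectivization.rep ∘ ![x, y] := by
      ext i; fin_cases i <;> rfl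
    rw [heq]; exact this
  have hcard : Module.finrank ℂ (Submodule.span ℂ (Set.range ![x.rep, y.rep])) = 2 := by
    rw [finrank_span_eq_card hind]; simp
  have hsub : ∀ (W : Submodule ℂ (Fin 3 → ℂ)), Module.finrank ℂ W = 2 →
      x.rep ∈ W → y.rep ∈ W → Submodule.span ℂ (Set.range ![x.rep, y.rep]) = W := by
    intro W hW hx hy
    refine Submodule.eq_of_le_of_finrank_le ?_ (by rw [hcard, hW])
    rw [Submodule.span_le]
    rintro z ⟨i, rfl⟩
    fin_cases i <;> simpa
  have : W = W' := by
    rw [← hsub W hW2 hxH hyH, hsub W' hW2' hxK hyK]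
  rw [this]

lemma three_le_mult {A : Finset (Set P2)} {p : P2} {H K M : Set P2}
    (hH : H ∈ A) (hK : K ∈ A) (hM : M ∈ A)
    (h1 : H ≠ K) (h2 : H ≠ M) (h3 : K ≠ M)
    (pH : p ∈ H) (pK : p ∈ K) (pM : p ∈ M) : 3 ≤ mult A p := by
  have hsub : ({H, K, M} : Finset (Set P2)) ⊆ A.filter (fun L => p ∈ L) := by
    intro x hx
    simp only [Finset.mem_insert, Finset.mem_singleton] at hx
    rcases hx with rfl | rfl | rfl <;> simp [Finset.mem_filter, *]
  have hcard : ({H, K, M} : Finset (Set P2)).card = 3 := by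
    rw [Finset.card_insert_of_notMem (by simp [h1, h2]),
      Finset.card_insert_of_notMem (by simp [h3]), Finset.card_singleton]
  calc 3 = ({H, K, M} : Finset (Set P2)).card := hcard.symm
    _ ≤ _ := Finset.card_le_card hsub

lemma M3_finite (A : Finset (Set P2)) (hA : ∀ L ∈ A, IsProjLine L) : Finite ↥(M3 A) := by
  have hex : ∀ x : ↥(M3 A), ∃ HK : ↥A × ↥A, (HK.1 : Set P2) ≠ (HK.2 : Set P2) ∧
      (x : P2) ∈ (HK.1 : Set P2) ∧ (x : P2) ∈ (HK.2 : Set P2) := by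
    rintro ⟨x, hx⟩
    have hx' : 3 ≤ (A.filter (fun L => x ∈ L)).card := hx
    obtain ⟨H, hH, K, hK, hne⟩ := Finset.one_lt_card.1 (show 1 < (A.filter (fun L => x ∈ L)).card by omega)
    rw [Finset.mem_filter] at hH hK
    exact ⟨(⟨H, hH.1⟩, ⟨K, hK.1⟩), hne, hH.2, hK.2⟩
  choose g hg1 hg2 hg3 using hex
  refine Finite.of_injective g ?_
  intro a b hab
  by_contra hne
  have hvne : (a : P2) ≠ (b : P2) := fun h => hne (Subtype.ext h)
  exact hg1 a (line_unique (hA _ (g a).1.2) (hA _ (g a).2.2) hvne (hg2 a) (hg3 a)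
    (hab ▸ hg2 b) (hab ▸ hg3 b))

section Fan
variable (A : Finset (Set P2)) [Fintype ↥(M3 A)]
  (P : Set P2 → Option (↥(M3 A) × ↥(M3 A)))

noncomputable def lineT (ℓ : Set P2) : Finset ↥(M3 A) :=
  Finset.univ.filter (fun x => (x : P2) ∈ ℓ)

lemma mem_lineT {ℓ : Set P2} {x : ↥(M3 A)} : x ∈ lineT A ℓ ↔ (x : P2) ∈ ℓ := by
  simp [lineT]

def PGood : Prop := ∀ ℓ a b, P ℓ = some (a, b) → a ≠ b ∧ (a : P2) ∈ ℓ ∧ (b : P2) ∈ ℓ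

noncomputable def lineList (ℓ : Set P2) : List ↥(M3 A) :=
  match P ℓ with
  | some (a, b) => a :: b :: (((lineT A ℓ).erase a).erase b).toList
  | none => (lineT A ℓ).toList

lemma lineList_nodup (hP : PGood A P) (ℓ : Set P2) : (lineList A P ℓ).Nodup := by
  unfold lineList
  rcases hPl : P ℓ with _ | ⟨a, b⟩
  · simpa using (lineT A ℓ).nodup_toList
  · obtain ⟨hab, ha, hb⟩ := hP ℓ a b hPl
    simp only [List.nodup_cons, List.mem_cons, Finset.mem_toList, Finset.mem_erase]
    refine ⟨?_, ?_, Finset.nodup_toList _⟩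
    · rintro (rfl | ⟨hne, _⟩) <;> simp_all
    · rintro ⟨hne, _⟩; simp_all

lemma mem_lineList (hP : PGood A P) (ℓ : Set P2) (x : ↥(M3 A)) :
    x ∈ lineList A P ℓ ↔ (x : P2) ∈ ℓ := by
  unfold lineList
  rcases hPl : P ℓ with _ | ⟨a, b⟩
  · simp [mem_lineT]
  · obtain ⟨hab, ha, hb⟩ := hP ℓ a b hPl
    simp only [List.mem_cons, Finset.mem_toList, Finset.mem_erase, mem_lineT]
    constructor
    · rintro (rfl | rfl | ⟨_, _, h⟩) <;> assumption
    · intro hx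
      by_cases h1 : x = a
      · exact Or.inl h1
      by_cases h2 : x = b
      · exact Or.inr (Or.inl h2)
      · exact Or.inr (Or.inr ⟨h2, h1, hx⟩)

noncomputable def Fgraph : SimpleGraph ↥(M3 A) where
  Adj x y := x ≠ y ∧ ∃ ℓ ∈ A, (x : P2) ∈ ℓ ∧ (y : P2) ∈ ℓ ∧
    ∃ i j : Fin (lineList A P ℓ).length, (j : ℕ) = (i : ℕ) + 1 ∧
      (((lineList A P ℓ).get i = x ∧ (lineList A P ℓ).get j = y) ∨
       ((lineList A P ℓ).get i = y ∧ (lineList A P ℓ).get j = x))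
  symm := ⟨by
    rintro x y ⟨hxy, ℓ, hℓ, hx, hy, i, j, hij, hc⟩
    exact ⟨hxy.symm, ℓ, hℓ, hy, hx, i, j, hij, hc.symm⟩⟩
  loopless := ⟨by rintro x ⟨h, -⟩; exact h rfl⟩

lemma fgraph_isFan (hA : ∀ L ∈ A, IsProjLine L) (hP : PGood A P) :
    (∀ v w : ↥(M3 A), (Fgraph A P).Adj v w → ∃ L ∈ A, (v : P2) ∈ L ∧ (w : P2) ∈ L) ∧
    ∀ L ∈ A, (∃ v : ↥(M3 A), (v : P2) ∈ L) →
      ∃ (m : ℕ) (e : Fin m → ↥(M3 A)), Function.Injective e ∧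
        (∀ v : ↥(M3 A), (v : P2) ∈ L ↔ ∃ i, e i = v) ∧
        (∀ v w : ↥(M3 A), (v : P2) ∈ L → (w : P2) ∈ L →
          ((Fgraph A P).Adj v w ↔ ∃ i j : Fin m, (j : ℕ) = (i : ℕ) + 1 ∧
            ((e i = v ∧ e j = w) ∨ (e i = w ∧ e j = v)))) := by
  constructor
  · rintro x y ⟨-, ℓ, hℓ, hx, hy, -⟩
    exact ⟨ℓ, hℓ, hx, hy⟩
  · intro ℓ hℓ _
    refine ⟨(lineList A P ℓ).length, (lineList A P ℓ).get,
      List.nodup_iff_injective_get.1 (lineList_nodup A P hP ℓ), ?_, ?_⟩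
    · intro x
      rw [← mem_lineList A P hP ℓ x, List.mem_iff_get]
    · intro x y hx hy
      constructor
      · rintro ⟨hxy, ℓ', hℓ', hx', hy', i, j, hij, hc⟩
        have hvne : (x : P2) ≠ (y : P2) := fun h => hxy (Subtype.ext h)
        have : ℓ' = ℓ := by
          by_cases h : ℓ' = ℓ
          · exact h
          · exact line_unique (hA _ hℓ') (hA _ hℓ) hvne hx' hx hy' hy
        subst this
        exact ⟨i, j, hij, hc⟩
      · rintro ⟨i, j, hij, hc⟩
        have hinj := List.nodup_iff_injective_get.1 (lineList_nodup A P hP ℓ)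
        have hijne : i ≠ j := by
          intro h; rw [h] at hij; omega
        have hne : x ≠ y := by
          rcases hc with ⟨hi, hj⟩ | ⟨hi, hj⟩ <;> rintro rfl <;>
            exact hijne (hinj (hi.trans hj.symm))
        exact ⟨hne, ℓ, hℓ, hx, hy, i, j, hij, hc⟩

lemma consec_head {α : Type*} (l : List α) (a b : α) (t : List α) (h : l = a :: b :: t) :
    ∃ i j : Fin l.length, (j : ℕ) = (i : ℕ) + 1 ∧ (l.get i = a ∧ l.get j = b) := by
  subst h
  exact ⟨⟨0, by simp⟩, ⟨1, by simp⟩, rfl, rfl, rfl⟩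

lemma fgraph_adj_of_pair (hP : PGood A P) {ℓ : Set P2} {a b : ↥(M3 A)}
    (hℓ : ℓ ∈ A) (h : P ℓ = some (a, b)) : (Fgraph A P).Adj a b := by
  obtain ⟨hab, ha, hb⟩ := hP ℓ a b h
  have hl : lineList A P ℓ = a :: b :: (((lineT A ℓ).erase a).erase b).toList := by
    unfold lineList; rw [h]
  obtain ⟨i, j, hij, h1, h2⟩ := consec_head (lineList A P ℓ) a b _ hl
  exact ⟨hab, ℓ, hℓ, ha, hb, i, j, hij, Or.inl ⟨h1, h2⟩⟩

end Fan

theorem circuits_repeating_line_give_gpp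
    (A : Finset (Set P2)) (hA : ∀ L ∈ A, IsProjLine L)
    (L : Set P2) (hL : L ∈ A)
    (v w : ↥(M3 A)) (hvw : v ≠ w) (hvL : (v : P2) ∈ L) (hwL : (w : P2) ∈ L)
    (hcirc : ∀ F : SimpleGraph ↥(M3 A), IsFanGraph A F → F.Adj v w →
      ∀ (u : ↥(M3 A)) (cW : F.Walk u u), cW.IsCycle → s(v, w) ∈ cW.edges →
        ∃ e₁ ∈ cW.edges, ∃ e₂ ∈ cW.edges, e₁ ≠ e₂ ∧
          (∀ x ∈ e₁, (x : P2) ∈ L) ∧ (∀ x ∈ e₂, (x : P2) ∈ L)) :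
    HasDeconeGPP A := by
  classical
  have hLine := hA L hL
  have hvwP : (v : P2) ≠ (w : P2) := fun h => hvw (Subtype.ext h)
  set R : Set P2 → Set P2 → Prop := fun H K =>
    H ∈ A.erase L ∧ K ∈ A.erase L ∧ H ≠ K ∧ ∃ p : P2, p ∈ H ∧ p ∈ K ∧ p ∈ M3 A with hRdef
  set Sv : Finset (Set P2) := (A.erase L).filter (fun H => (v : P2) ∈ H) with hSvdef
  set Sw : Finset (Set P2) := (A.erase L).filter (fun H => (w : P2) ∈ H) with hSwdef
  have hSvmem : ∀ H, H ∈ Sv ↔ (H ∈ A.erase L ∧ (v : P2) ∈ H) := by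
    intro H; rw [hSvdef, Finset.mem_filter]
  have hSwmem : ∀ H, H ∈ Sw ↔ (H ∈ A.erase L ∧ (w : P2) ∈ H) := by
    intro H; rw [hSwdef, Finset.mem_filter]
  have hSv : Sv.Nonempty := by
    have h3 : 3 ≤ (A.filter (fun H => (v : P2) ∈ H)).card := v.2
    obtain ⟨H, hH, hne⟩ := Finset.exists_mem_ne
      (show 1 < (A.filter (fun H => (v : P2) ∈ H)).card by omega) L
    rw [Finset.mem_filter] at hH
    exact ⟨H, (hSvmem H).2 ⟨Finset.mem_erase.2 ⟨hne, hH.1⟩, hH.2⟩⟩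
  have hSw : Sw.Nonempty := by
    have h3 : 3 ≤ (A.filter (fun H => (w : P2) ∈ H)).card := w.2
    obtain ⟨H, hH, hne⟩ := Finset.exists_mem_ne
      (show 1 < (A.filter (fun H => (w : P2) ∈ H)).card by omega) L
    rw [Finset.mem_filter] at hH
    exact ⟨H, (hSwmem H).2 ⟨Finset.mem_erase.2 ⟨hne, hH.1⟩, hH.2⟩⟩
  have hSvSw : ∀ H, H ∈ Sv → H ∈ Sw → False := by
    intro H h1 h2
    rw [hSvmem] at h1; rw [hSwmem] at h2
    exact (Finset.mem_erase.1 h1.1).1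
      (line_unique (hA H (Finset.mem_of_mem_erase h1.1)) hLine hvwP h1.2 hvL h2.2 hwL)
  by_cases hreach : ∃ H ∈ Sv, ∃ K ∈ Sw, Relation.ReflTransGen R H K
  case neg =>
    refine ⟨L, hL, (A.erase L).filter (fun H => ∃ H₀ ∈ Sv, Relation.ReflTransGen R H₀ H),
      (A.erase L).filter (fun H => ¬ ∃ H₀ ∈ Sv, Relation.ReflTransGen R H₀ H),
      ?_, ?_, ?_, ?_, ?_⟩
    · obtain ⟨H, hH⟩ := hSv
      exact ⟨H, Finset.mem_filter.2 ⟨((hSvmem H).1 hH).1, H, hH, Relation.ReflTransGen.refl⟩⟩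
    · obtain ⟨K, hK⟩ := hSw
      refine ⟨K, Finset.mem_filter.2 ⟨((hSwmem K).1 hK).1, ?_⟩⟩
      rintro ⟨H₀, hH₀, hr⟩
      exact hreach ⟨H₀, hH₀, K, hK, hr⟩
    · exact Finset.disjoint_filter_filter_not _ _ _
    · exact Finset.filter_union_filter_not_eq _ _
    · intro H₁ h1 H₂ h2 p hp K hK hpK
      by_contra hcon
      push_neg at hcon
      rw [Finset.mem_filter] at h1 h2
      have hne12 : H₁ ≠ H₂ := by rintro rfl; exact h2.2 h1.2
      have hm : p ∈ M3 A := three_le_mult (Finset.mem_of_mem_erase h1.1)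
        (Finset.mem_of_mem_erase h2.1) hK hne12 (Ne.symm hcon.1) (Ne.symm hcon.2)
        hp.1 hp.2 hpK
      obtain ⟨H₀, hH₀, hr⟩ := h1.2
      exact h2.2 ⟨H₀, hH₀, hr.tail ⟨h1.1, h2.1, hne12, p, hp.1, hp.2, hm⟩⟩
  case pos =>
  exfalso
  obtain ⟨H0, hH0, K0, hK0, hr⟩ := hreach
  have hQex : ∃ n, ∃ f : ℕ → Set P2, f 0 ∈ Sv ∧ f n ∈ Sw ∧ ∀ i < n, R (f i) (f (i+1)) := by
    have key : ∀ {a b : Set P2}, Relation.ReflTransGen R a b →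
        ∃ n, ∃ f : ℕ → Set P2, f 0 = a ∧ f n = b ∧ ∀ i < n, R (f i) (f (i+1)) := by
      intro a b h
      induction h with
      | refl => exact ⟨0, fun _ => a, rfl, rfl, by omega⟩
      | @tail b c hab hbc ih =>
        obtain ⟨n, g, h1, h2, h3⟩ := ih
        refine ⟨n+1, fun m => if m ≤ n then g m else c, by simpa using h1, by simp, ?_⟩
        intro i hi
        by_cases h : i + 1 ≤ n
        · simpa [show i ≤ n by omega, h] using h3 i (by omega)
        · have hin : i = n := by omega
          subst hin
          simpa [le_refl, h, h2] using hbc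
    obtain ⟨n, f, h1, h2, h3⟩ := key hr
    exact ⟨n, f, h1 ▸ hH0, h2 ▸ hK0, h3⟩
  obtain ⟨f, hf0, hfk, hfe⟩ := Nat.find_spec hQex
  set k := Nat.find hQex with hkdef
  have hmin : ∀ m, m < k →
      ¬ ∃ g : ℕ → Set P2, g 0 ∈ Sv ∧ g m ∈ Sw ∧ ∀ i < m, R (g i) (g (i+1)) :=
    fun m hm => Nat.find_min hQex hm
  have hk1 : 1 ≤ k := by
    by_contra h
    have hk0 : k = 0 := by omega
    rw [hk0] at hfk
    exact hSvSw (f 0) hf0 hfk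
  have fmem : ∀ i, i ≤ k → f i ∈ A.erase L := by
    intro i hi
    rcases lt_or_eq_of_le hi with h | heq
    · exact (hfe i h).1
    · rw [heq]
      have := (hfe (k-1) (by omega)).2.1
      rwa [show k - 1 + 1 = k by omega] at this
  have fA : ∀ i, i ≤ k → f i ∈ A := fun i hi => Finset.mem_of_mem_erase (fmem i hi)
  have fnL : ∀ i, i ≤ k → f i ≠ L := fun i hi => (Finset.mem_erase.1 (fmem i hi)).1
  have shortcut : ∀ a d : ℕ, 1 ≤ d → a + d ≤ k → (a < k - d → R (f a) (f (a+1+d))) →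
      (k - d ≤ a → f (k-d) ∈ Sw) → False := by
    intro a d hd had hlink hend
    refine hmin (k - d) (by omega) ⟨fun m => if m ≤ a then f m else f (m + d), ?_, ?_, ?_⟩
    · simpa using hf0
    · by_cases h : k - d ≤ a
      · simpa [h] using hend h
      · have h2 : k - d + d = k := by omega
        simp only [if_neg h, h2]
        exact hfk
    · intro m hm
      by_cases h1 : m + 1 ≤ a
      · simpa [show m ≤ a by omega, h1] using hfe m (by omega)
      by_cases h2 : m ≤ a
      · have hma : m = a := by omega
        subst hma
        simp only [if_pos h2, if_neg h1]
        exact hlink hm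
      · have h3 : ¬ (m + 1 ≤ a) := by omega
        simp only [if_neg h2, if_neg h3]
        rw [show m + 1 + d = (m + d) + 1 by omega]
        exact hfe (m+d) (by omega)
  have fInj : ∀ a b, a < b → b ≤ k → f a ≠ f b := by
    intro a b hab hbk heq
    refine shortcut a (b - a) (by omega) (by omega) ?_ ?_
    · intro h
      rw [show a + 1 + (b - a) = b + 1 by omega, heq]
      exact hfe b (by omega)
    · intro h
      have h1 : k - (b - a) = a := by omega
      have h2 : b = k := by omega
      rw [h1, heq, h2]
      exact hfk
  have rshort : ∀ a b, a + 2 ≤ b → b ≤ k →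
      (∃ p : P2, p ∈ f a ∧ p ∈ f b ∧ p ∈ M3 A) → False := by
    intro a b hab hbk hpt
    have hRab : R (f a) (f b) := ⟨fmem a (by omega), fmem b hbk, fInj a b (by omega) hbk, hpt⟩
    refine shortcut a (b - a - 1) (by omega) (by omega) ?_ (fun h => absurd h (by omega))
    intro _
    rw [show a + 1 + (b - a - 1) = b by omega]
    exact hRab
  have dropC : ∀ i, 1 ≤ i → i ≤ k → f i ∈ Sv → False := by
    intro i h1 h2 hmem
    refine hmin (k - i) (by omega) ⟨fun m => f (m + i), by simpa using hmem, ?_, ?_⟩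
    · show f (k - i + i) ∈ Sw
      rw [show k - i + i = k by omega]; exact hfk
    · intro m hm
      show R (f (m + i)) (f (m + 1 + i))
      rw [show m + 1 + i = m + i + 1 by omega]
      exact hfe (m+i) (by omega)
  have takeC : ∀ j, j < k → f j ∈ Sw → False := by
    intro j hj hmem
    exact hmin j hj ⟨f, hf0, hmem, fun i hi => hfe i (by omega)⟩
  have hpex : ∀ i : ℕ, ∃ q : P2, i < k → q ∈ f i ∧ q ∈ f (i+1) ∧ q ∈ M3 A := by
    intro i
    by_cases hi : i < k
    · obtain ⟨q, hq⟩ := (hfe i hi).2.2.2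
      exact ⟨q, fun _ => hq⟩
    · exact ⟨(v : P2), fun h => absurd h hi⟩
  choose p hp using hpex
  have hp1 : ∀ i, i < k → p i ∈ f i := fun i h => (hp i h).1
  have hp2 : ∀ i, i < k → p i ∈ f (i+1) := fun i h => (hp i h).2.1
  have hp3 : ∀ i, i < k → p i ∈ M3 A := fun i h => (hp i h).2.2
  have hvf0 : (v : P2) ∈ f 0 := ((hSvmem (f 0)).1 hf0).2
  have hwfk : (w : P2) ∈ f k := ((hSwmem (f k)).1 hfk).2
  have D1 : ∀ i j, i < j → j < k → p i ≠ p j := by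
    intro i j hij hj heq
    refine rshort i (j+1) (by omega) (by omega) ⟨p i, hp1 i (by omega), ?_, hp3 i (by omega)⟩
    rw [heq]; exact hp2 j hj
  have D2 : ∀ i, i < k → p i ≠ (v : P2) := by
    intro i hi heq
    refine dropC (i+1) (by omega) (by omega) ((hSvmem _).2 ⟨fmem (i+1) (by omega), ?_⟩)
    rw [← heq]; exact hp2 i hi
  have D3 : ∀ i, i < k → p i ≠ (w : P2) := by
    intro i hi heq
    refine takeC i hi ((hSwmem _).2 ⟨fmem i (by omega), ?_⟩)
    rw [← heq]; exact hp1 i hi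
  have D4 : p 0 ∉ L := by
    intro hpL
    exact fnL 0 (by omega) (line_unique (hA _ (fA 0 (by omega))) hLine (D2 0 (by omega))
      (hp1 0 (by omega)) hpL hvf0 hvL)
  have D5 : p (k-1) ∉ L := by
    intro hpL
    have h1 : p (k-1) ∈ f k := by
      have := hp2 (k-1) (by omega)
      rwa [show k - 1 + 1 = k by omega] at this
    exact fnL k le_rfl (line_unique (hA _ (fA k le_rfl)) hLine (D3 (k-1) (by omega))
      h1 hpL hwfk hwL)
  have D6 : ∀ i, i + 1 < k → ¬ (p i ∈ L ∧ p (i+1) ∈ L) := by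
    rintro i hi ⟨h1, h2⟩
    exact fnL (i+1) (by omega) (line_unique (hA _ (fA (i+1) (by omega))) hLine
      (D1 i (i+1) (by omega) hi) (hp2 i (by omega)) h1 (hp1 (i+1) hi) h2)
  haveI : Finite ↥(M3 A) := M3_finite A hA
  haveI : Fintype ↥(M3 A) := Fintype.ofFinite _
  set q : ℕ → ↥(M3 A) := fun i => if h : i < k then ⟨p i, hp3 i h⟩ else v with hqdef
  have hqv : ∀ i, i < k → (q i : P2) = p i := by
    intro i h
    rw [hqdef]
    simp only [dif_pos h]
  set Pm : Set P2 → Option (↥(M3 A) × ↥(M3 A)) := fun ℓ =>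
    if ℓ = L then some (v, w)
    else if h : ∃ i, i ≤ k ∧ f i = ℓ then
      some (if Nat.find h = 0 then v else q (Nat.find h - 1),
            if Nat.find h = k then w else q (Nat.find h)) else none with hPmdef
  have hPmL : Pm L = some (v, w) := by simp [hPmdef]
  have hPmf : ∀ i, i ≤ k →
      Pm (f i) = some (if i = 0 then v else q (i-1), if i = k then w else q i) := by
    intro i hi
    have hex : ∃ j, j ≤ k ∧ f j = f i := ⟨i, hi, rfl⟩
    have hfind : Nat.find hex = i := by
      have h1 := Nat.find_spec hex
      by_contra hne
      rcases Nat.lt_or_ge (Nat.find hex) i with h | h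
      · exact fInj _ i h hi h1.2
      · have hlt : i < Nat.find hex := by omega
        exact fInj i _ hlt h1.1 h1.2.symm
    simp only [hPmdef]
    rw [if_neg (fnL i hi), dif_pos hex, hfind]
  have hq0f0 : (q 0 : P2) ∈ f 0 := by rw [hqv 0 (by omega)]; exact hp1 0 (by omega)
  have hqkfk : (q (k-1) : P2) ∈ f k := by
    rw [hqv (k-1) (by omega)]
    have := hp2 (k-1) (by omega)
    rwa [show k - 1 + 1 = k by omega] at this
  have hqmid : ∀ i, 1 ≤ i → i < k → (q (i-1) : P2) ∈ f i ∧ (q i : P2) ∈ f i := by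
    intro i h1 h2
    constructor
    · rw [hqv (i-1) (by omega)]
      have := hp2 (i-1) (by omega)
      rwa [show i - 1 + 1 = i by omega] at this
    · rw [hqv i h2]; exact hp1 i h2
  have hqnev : ∀ i, i < k → q i ≠ v := by
    intro i hi heq
    exact D2 i hi (by rw [← hqv i hi, heq])
  have hqnew : ∀ i, i < k → q i ≠ w := by
    intro i hi heq
    exact D3 i hi (by rw [← hqv i hi, heq])
  have hqinj : ∀ i j, i < j → j < k → q i ≠ q j := by
    intro i j hij hj heq
    exact D1 i j hij hj (by rw [← hqv i (by omega), ← hqv j hj, heq])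
  have hPmGood : PGood A Pm := by
    intro ℓ a b hab
    simp only [hPmdef] at hab
    by_cases hℓL : ℓ = L
    · subst hℓL
      rw [if_pos rfl] at hab
      injection hab with hab'
      rw [Prod.mk.injEq] at hab'
      obtain ⟨rfl, rfl⟩ := hab'
      exact ⟨hvw, hvL, hwL⟩
    · rw [if_neg hℓL] at hab
      by_cases hex : ∃ i, i ≤ k ∧ f i = ℓ
      · rw [dif_pos hex] at hab
        injection hab with hab'
        rw [Prod.mk.injEq] at hab'
        obtain ⟨ha, hb⟩ := hab'
        obtain ⟨hik, hfi⟩ := Nat.find_spec hex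
        set i := Nat.find hex with hidef
        rw [← ha, ← hb, ← hfi]
        by_cases hi0 : i = 0
        · rw [hi0, if_pos rfl, if_neg (by omega : ¬ ((0:ℕ) = k))]
          exact ⟨Ne.symm (hqnev 0 (by omega)), hvf0, hq0f0⟩
        by_cases hik' : i = k
        · rw [hik', if_neg (by omega : ¬ (k = 0)), if_pos rfl]
          exact ⟨hqnew (k-1) (by omega), hqkfk, hwfk⟩
        · rw [if_neg hi0, if_neg hik']
          obtain ⟨hm1, hm2⟩ := hqmid i (by omega) (by omega)
          exact ⟨hqinj (i-1) i (by omega) (by omega), hm1, hm2⟩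
      · rw [dif_neg hex] at hab
        cases hab
  set F := Fgraph A Pm with hFdef
  have hFan := fgraph_isFan A Pm hA hPmGood
  have hAdjvw : F.Adj v w := fgraph_adj_of_pair A Pm hPmGood hL hPmL
  have hAdj0 : F.Adj v (q 0) := by
    refine fgraph_adj_of_pair A Pm hPmGood (fA 0 (by omega)) ?_
    rw [hPmf 0 (by omega), if_pos rfl, if_neg (by omega : ¬ (0 = k))]
  have hAdjmid : ∀ i, 1 ≤ i → i < k → F.Adj (q (i-1)) (q i) := by
    intro i h1 h2
    refine fgraph_adj_of_pair A Pm hPmGood (fA i (by omega)) ?_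
    rw [hPmf i (by omega), if_neg (by omega : ¬ (i = 0)), if_neg (by omega : ¬ (i = k))]
  have hAdjlast : F.Adj (q (k-1)) w := by
    refine fgraph_adj_of_pair A Pm hPmGood (fA k le_rfl) ?_
    rw [hPmf k le_rfl, if_neg (by omega : ¬ (k = 0)), if_pos rfl]
  have wkex : ∀ i, i < k → ∃ W : F.Walk (q i) v, W.IsPath ∧
      (∀ x ∈ W.support, x = v ∨ ∃ j, j ≤ i ∧ x = q j) ∧
      (∀ e ∈ W.edges, ∃ x ∈ e, (x : P2) ∉ L) := by
    intro i
    induction i with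
    | zero =>
      intro h0
      refine ⟨SimpleGraph.Walk.cons hAdj0.symm SimpleGraph.Walk.nil, ?_, ?_, ?_⟩
      · rw [SimpleGraph.Walk.cons_isPath_iff]
        refine ⟨SimpleGraph.Walk.IsPath.nil, ?_⟩
        simp only [SimpleGraph.Walk.support_nil, List.mem_singleton]
        exact hqnev 0 h0
      · intro x hx
        simp only [SimpleGraph.Walk.support_cons, SimpleGraph.Walk.support_nil,
          List.mem_cons, List.mem_singleton] at hx
        rcases hx with rfl | rfl | h
        · exact Or.inr ⟨0, le_rfl, rfl⟩
        · exact Or.inl rfl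
        · cases h
      · intro e he
        simp only [SimpleGraph.Walk.edges_cons, SimpleGraph.Walk.edges_nil,
          List.mem_singleton] at he
        subst he
        exact ⟨q 0, Sym2.mem_mk_left _ _, by rw [hqv 0 h0]; exact D4⟩
    | succ n ih =>
      intro h
      obtain ⟨W, hWp, hWs, hWe⟩ := ih (by omega)
      have hadj : F.Adj (q (n+1)) (q n) := by
        have h' := hAdjmid (n+1) (by omega) h
        rw [show n + 1 - 1 = n from rfl] at h'
        exact h'.symm
      refine ⟨SimpleGraph.Walk.cons hadj W, ?_, ?_, ?_⟩
      · rw [SimpleGraph.Walk.cons_isPath_iff]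
        refine ⟨hWp, fun hmem => ?_⟩
        rcases hWs _ hmem with heq | ⟨j, hj, heq⟩
        · exact hqnev (n+1) h heq
        · exact hqinj j (n+1) (by omega) h heq.symm
      · intro x hx
        rw [SimpleGraph.Walk.support_cons, List.mem_cons] at hx
        rcases hx with rfl | hx
        · exact Or.inr ⟨n+1, le_rfl, rfl⟩
        · rcases hWs _ hx with heq | ⟨j, hj, heq⟩
          · exact Or.inl heq
          · exact Or.inr ⟨j, by omega, heq⟩
      · intro e he
        rw [SimpleGraph.Walk.edges_cons, List.mem_cons] at he
        rcases he with rfl | he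
        · by_cases hnL : p n ∈ L
          · refine ⟨q (n+1), Sym2.mem_mk_left _ _, ?_⟩
            rw [hqv (n+1) h]
            intro hcon
            exact D6 n h ⟨hnL, hcon⟩
          · exact ⟨q n, Sym2.mem_mk_right _ _, by rw [hqv n (by omega)]; exact hnL⟩
        · exact hWe e he
  obtain ⟨W, hWp, hWs, hWe⟩ := wkex (k-1) (by omega)
  have hadjw : F.Adj w (q (k-1)) := hAdjlast.symm
  have hpWpath : (SimpleGraph.Walk.cons hadjw W).IsPath := by
    rw [SimpleGraph.Walk.cons_isPath_iff]
    refine ⟨hWp, fun hmem => ?_⟩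
    rcases hWs _ hmem with heq | ⟨j, hj, heq⟩
    · exact hvw heq.symm
    · exact hqnew j (by omega) heq.symm
  have hpWe : ∀ e ∈ (SimpleGraph.Walk.cons hadjw W).edges, ∃ x ∈ e, (x : P2) ∉ L := by
    intro e he
    rw [SimpleGraph.Walk.edges_cons, List.mem_cons] at he
    rcases he with rfl | he
    · exact ⟨q (k-1), Sym2.mem_mk_right _ _, by rw [hqv (k-1) (by omega)]; exact D5⟩
    · exact hWe e he
  have hsvw : s(v, w) ∉ (SimpleGraph.Walk.cons hadjw W).edges := by
    intro hmem
    obtain ⟨x, hx, hxL⟩ := hpWe _ hmem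
    rcases Sym2.mem_iff.1 hx with rfl | rfl
    · exact hxL hvL
    · exact hxL hwL
  have hcyc : (SimpleGraph.Walk.cons hAdjvw (SimpleGraph.Walk.cons hadjw W)).IsCycle :=
    (SimpleGraph.Walk.cons_isCycle_iff _ hAdjvw).2 ⟨hpWpath, hsvw⟩
  have hsm : s(v, w) ∈ (SimpleGraph.Walk.cons hAdjvw (SimpleGraph.Walk.cons hadjw W)).edges := by
    rw [SimpleGraph.Walk.edges_cons]
    exact List.mem_cons_self
  obtain ⟨e₁, he₁, e₂, he₂, hne, hL1, hL2⟩ :=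
    hcirc F ⟨hFan.1, hFan.2⟩ hAdjvw v _ hcyc hsm
  have honly : ∀ e ∈ (SimpleGraph.Walk.cons hAdjvw (SimpleGraph.Walk.cons hadjw W)).edges,
      (∀ x ∈ e, (x : P2) ∈ L) → e = s(v, w) := by
    intro e he hall
    rw [SimpleGraph.Walk.edges_cons, List.mem_cons] at he
    rcases he with rfl | he
    · rfl
    · obtain ⟨x, hx, hxL⟩ := hpWe e he
      exact absurd (hall x hx) hxL
  exact hne ((honly e₁ he₁ hL1).trans (honly e₂ he₂ hL2).symm)
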